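/- Let n merchants be partitioned into K nonempty clusters with sizes n*_1,…,n*_K and n_min = min_k n*_k, and draw a simple random sample without replacement of size n_s. Then the probability that at least one cluster has no sampled merchant is at most K (1 − n_min/n)^{n_s}; equivalently, P(e*) ≥ 1 − K(1 − n_min/n)^{n_s}, where e* is the event that every cluster has at least one sampled merchant. -/

import Mathlib

open Finset

/-- Probability, under simple random sampling without replacement of a size-`ns` subset of
the `n` merchants (uniform over all such subsets), of an event `E` about the sampled set. -/
noncomputable def srsProb (n ns : ℕ) (E : Finset (Fin n) → Prop) : ℝ :=
  ((@Finset.filter _ (fun s => E s) (Classical.decPred _)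
      (Finset.powersetCard ns (Finset.univ : Finset (Fin n)))).card : ℝ) /
    ((Finset.powersetCard ns (Finset.univ : Finset (Fin n))).card : ℝ)

/-- Size of cluster `k` among the `n` merchants with labels `γ`. -/
noncomputable def clusterSize {n K : ℕ} (γ : Fin n → Fin K) (k : Fin K) : ℕ :=
  (Finset.univ.filter fun i => γ i = k).card

/-- Minimal cluster size `n_min = min_k n*_k`. -/
noncomputable def nMin {n K : ℕ} (γ : Fin n → Fin K) : ℕ := ⨅ k, clusterSize γ k

/-- Cancelling `r !`: `n^r * C(m,r) ≤ m^r * C(n,r)` for `m ≤ n`. -/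
lemma pow_mul_choose_le {m n : ℕ} (h : m ≤ n) (r : ℕ) :
    n ^ r * m.choose r ≤ m ^ r * n.choose r := by
  have key : n ^ r * m.descFactorial r ≤ m ^ r * n.descFactorial r := by
    have e1 : n ^ r = ∏ _i ∈ Finset.range r, n := by simp
    have e2 : m ^ r = ∏ _i ∈ Finset.range r, m := by simp
    rw [Nat.descFactorial_eq_prod_range, Nat.descFactorial_eq_prod_range, e1, e2,
      ← Finset.prod_mul_distrib, ← Finset.prod_mul_distrib]
    apply Finset.prod_le_prod'
    intro i _
    rcases le_or_gt i m with him | him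
    · have hin : i ≤ n := le_trans him h
      zify [him, hin]
      nlinarith [mul_le_mul_of_nonneg_right (show (m : ℤ) ≤ n by exact_mod_cast h)
        (show (0 : ℤ) ≤ i by positivity)]
    · simp [Nat.sub_eq_zero_of_le (le_of_lt him)]
  rw [Nat.descFactorial_eq_factorial_mul_choose, Nat.descFactorial_eq_factorial_mul_choose] at key
  have hf : 0 < r.factorial := Nat.factorial_pos r
  have h2 : r.factorial * (n ^ r * m.choose r) ≤ r.factorial * (m ^ r * n.choose r) := by
    calc r.factorial * (n ^ r * m.choose r) = n ^ r * (r.factorial * m.choose r) := by ring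
    _ ≤ m ^ r * (r.factorial * n.choose r) := key
    _ = r.factorial * (m ^ r * n.choose r) := by ring
  exact Nat.le_of_mul_le_mul_left h2 hf

/-- Ratio form: `C(m,r) ≤ C(n,r) * (m/n)^r` for `m ≤ n`, `0 < n`. -/
lemma choose_ratio_le {m n : ℕ} (h : m ≤ n) (hn : 0 < n) (r : ℕ) :
    (m.choose r : ℝ) ≤ (n.choose r : ℝ) * ((m : ℝ) / n) ^ r := by
  have hnr : (0 : ℝ) < (n : ℝ) ^ r := by positivity
  rw [div_pow, ← mul_div_assoc, le_div_iff₀ hnr]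
  calc (m.choose r : ℝ) * (n : ℝ) ^ r = ((n ^ r * m.choose r : ℕ) : ℝ) := by push_cast; ring
  _ ≤ ((m ^ r * n.choose r : ℕ) : ℝ) := by exact_mod_cast pow_mul_choose_le h r
  _ = (n.choose r : ℝ) * (m : ℝ) ^ r := by push_cast; ring

/-- under simple random sampling without replacement of `n_s` merchants out of
`n` merchants partitioned into `K` nonempty clusters with minimal cluster size `n_min`, the
probability that some cluster has no sampled merchant is at most `K (1 − n_min/n)^{n_s}`;
equivalently `P(e*) ≥ 1 − K (1 − n_min/n)^{n_s}`. -/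
theorem srs_miss_prob_union_bound {n K ns : ℕ} (hK : 0 < K) (hns : ns ≤ n)
    (γ : Fin n → Fin K) (hsurj : Function.Surjective γ) :
    srsProb n ns (fun s => ¬ ∀ k : Fin K, ∃ i ∈ s, γ i = k) ≤
        (K : ℝ) * (1 - (nMin γ : ℝ) / (n : ℝ)) ^ ns ∧
      1 - (K : ℝ) * (1 - (nMin γ : ℝ) / (n : ℝ)) ^ ns ≤
        srsProb n ns (fun s => ∀ k : Fin K, ∃ i ∈ s, γ i = k) := by
  classical
  obtain ⟨i0, -⟩ := hsurj ⟨0, hK⟩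
  have hn : 0 < n := i0.pos
  set P := Finset.powersetCard ns (Finset.univ : Finset (Fin n)) with hP
  have hPcard : P.card = n.choose ns := by
    rw [hP, Finset.card_powersetCard, Finset.card_univ, Fintype.card_fin]
  have hchoose : 0 < n.choose ns := Nat.choose_pos hns
  have hPpos : (0 : ℝ) < (P.card : ℝ) := by
    rw [hPcard]; exact_mod_cast hchoose
  -- cluster size facts
  have hcs_le : ∀ k, clusterSize γ k ≤ n := fun k => by
    calc clusterSize γ k ≤ (Finset.univ : Finset (Fin n)).card :=
      Finset.card_le_card (Finset.filter_subset _ _)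
    _ = n := by rw [Finset.card_univ, Fintype.card_fin]
  have hmin_le : ∀ k, nMin γ ≤ clusterSize γ k := fun k =>
    ciInf_le (OrderBot.bddBelow _) k
  have hmin_le_n : nMin γ ≤ n := le_trans (hmin_le ⟨0, hK⟩) (hcs_le ⟨0, hK⟩)
  have hbase0 : (0 : ℝ) ≤ 1 - (nMin γ : ℝ) / n := by
    have : (nMin γ : ℝ) / n ≤ 1 := by
      rw [div_le_one (by exact_mod_cast hn)]
      exact_mod_cast hmin_le_n
    linarith
  -- the two filtered sets
  set A := @Finset.filter _ (fun s => ¬ ∀ k : Fin K, ∃ i ∈ s, γ i = k) (Classical.decPred _) P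
    with hA
  set B := @Finset.filter _ (fun s => ∀ k : Fin K, ∃ i ∈ s, γ i = k) (Classical.decPred _) P
    with hB
  -- union bound on A.card
  have hAsub : A ⊆ Finset.univ.biUnion
      (fun k : Fin K => P.filter (fun s => ∀ i ∈ s, γ i ≠ k)) := by
    intro s hs
    rw [hA, Finset.filter_congr_decidable, Finset.mem_filter] at hs
    obtain ⟨hsP, hmiss⟩ := hs
    push_neg at hmiss
    obtain ⟨k, hk⟩ := hmiss
    exact Finset.mem_biUnion.2 ⟨k, Finset.mem_univ k,
      Finset.mem_filter.2 ⟨hsP, fun i hi => hk i hi⟩⟩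
  have hfilt : ∀ k : Fin K, (P.filter (fun s => ∀ i ∈ s, γ i ≠ k)).card =
      (n - clusterSize γ k).choose ns := by
    intro k
    have heq : P.filter (fun s => ∀ i ∈ s, γ i ≠ k) =
        Finset.powersetCard ns (Finset.univ.filter (fun i => ¬ γ i = k)) := by
      ext s
      simp only [hP, Finset.mem_filter, Finset.mem_powersetCard, Finset.subset_iff,
        Finset.mem_univ, true_and]
      tauto
    have hcomp : (Finset.univ.filter (fun i => ¬ γ i = k)).card = n - clusterSize γ k := by
      rw [show (Finset.univ.filter (fun i => ¬ γ i = k)) =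
          Finset.univ \ (Finset.univ.filter (fun i => γ i = k)) by ext i; simp]
      rw [Finset.card_sdiff_of_subset (Finset.filter_subset _ _), Finset.card_univ, Fintype.card_fin]
      rfl
    rw [heq, Finset.card_powersetCard, hcomp]
  have hAcard : (A.card : ℝ) ≤ ∑ k : Fin K, ((n - clusterSize γ k).choose ns : ℝ) := by
    have h1 : A.card ≤ ∑ k : Fin K, (P.filter (fun s => ∀ i ∈ s, γ i ≠ k)).card :=
      le_trans (Finset.card_le_card hAsub) (Finset.card_biUnion_le)
    calc (A.card : ℝ) ≤ (∑ k : Fin K, (P.filter (fun s => ∀ i ∈ s, γ i ≠ k)).card : ℕ) := by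
          exact_mod_cast h1
    _ = ∑ k : Fin K, ((n - clusterSize γ k).choose ns : ℝ) := by
          push_cast
          exact Finset.sum_congr rfl fun k _ => by rw [hfilt k]
  have hterm : ∀ k : Fin K, ((n - clusterSize γ k).choose ns : ℝ) ≤
      (n.choose ns : ℝ) * (1 - (nMin γ : ℝ) / n) ^ ns := by
    intro k
    have h1 : ((n - clusterSize γ k).choose ns : ℝ) ≤
        (n.choose ns : ℝ) * (((n - clusterSize γ k : ℕ) : ℝ) / n) ^ ns :=
      choose_ratio_le (Nat.sub_le _ _) hn ns
    refine h1.trans ?_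
    apply mul_le_mul_of_nonneg_left _ (by positivity)
    apply pow_le_pow_left₀ (by positivity)
    rw [Nat.cast_sub (hcs_le k)]
    have hck : (nMin γ : ℝ) ≤ (clusterSize γ k : ℝ) := by exact_mod_cast hmin_le k
    have hnpos : (0 : ℝ) < n := by exact_mod_cast hn
    rw [sub_div, div_self (ne_of_gt hnpos)]
    have hd : (nMin γ : ℝ) / n ≤ (clusterSize γ k : ℝ) / n := by
      gcongr
    linarith
  have hAbound : (A.card : ℝ) ≤ (K : ℝ) * (1 - (nMin γ : ℝ) / n) ^ ns * P.card := by
    calc (A.card : ℝ) ≤ ∑ k : Fin K, ((n - clusterSize γ k).choose ns : ℝ) := hAcard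
    _ ≤ ∑ _k : Fin K, (n.choose ns : ℝ) * (1 - (nMin γ : ℝ) / n) ^ ns :=
        Finset.sum_le_sum fun k _ => hterm k
    _ = (K : ℝ) * (1 - (nMin γ : ℝ) / n) ^ ns * P.card := by
        rw [Finset.sum_const, Finset.card_univ, Fintype.card_fin, hPcard]
        push_cast; ring
  have hfirst : srsProb n ns (fun s => ¬ ∀ k : Fin K, ∃ i ∈ s, γ i = k) ≤
      (K : ℝ) * (1 - (nMin γ : ℝ) / (n : ℝ)) ^ ns := by
    rw [srsProb, div_le_iff₀ hPpos]
    exact hAbound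
  refine ⟨hfirst, ?_⟩
  -- complement
  have hsplit : B.card + A.card = P.card := by
    rw [hA, hB]
    exact @Finset.card_filter_add_card_filter_not _ P
      (fun s => ∀ k : Fin K, ∃ i ∈ s, γ i = k) (Classical.decPred _)
      (fun _ => Classical.dec _)
  have hBeq : srsProb n ns (fun s => ∀ k : Fin K, ∃ i ∈ s, γ i = k) =
      1 - srsProb n ns (fun s => ¬ ∀ k : Fin K, ∃ i ∈ s, γ i = k) := by
    rw [srsProb, srsProb]
    rw [eq_sub_iff_add_eq, ← add_div, ← Nat.cast_add]
    rw [show (@Finset.filter _ (fun s => ∀ k : Fin K, ∃ i ∈ s, γ i = k) (Classical.decPred _) P).card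
      + (@Finset.filter _ (fun s => ¬ ∀ k : Fin K, ∃ i ∈ s, γ i = k) (Classical.decPred _) P).card
      = P.card from hsplit]
    exact div_self (ne_of_gt hPpos)
  rw [hBeq]
  linarith
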